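/- Let α > 2, λ > 0, i_0 > 0 and s > 0 be real numbers with s · i_0 < 1. Then 2πλ ∫_{r=0}^{∞} ∫_{u=r}^{∞} 4(πλ)^2 r u e^{−πλ u^2} · [ ∫_{ρ=u}^{∞} ( s i_0 u^{α} ρ^{1−α} ) / ( 1 + s i_0 u^{α} ρ^{−α} ) dρ ] du dr = 4 s i_0 · Σ_{n=0}^{∞} (−s i_0)^{n} / ( α(n+1) − 2 ). In particular, the value of this triple integral does not depend on λ. (The right-hand side equals (4 s i_0/(α−2)) · ₂F₁(1, (α−2)/α; 2 − 2/α; −s i_0), so this is the closed-form exponent of the Laplace transform of the interference in the low-i_0 regime under minimum path loss association, L_I^{(i_0∼0)}(s) = exp(−(4 s i_0/(α−2)) ₂F₁(1,(α−2)/α;2−2/α;−s i_0)), together with the paper's Remark 1 that all interference statistics are then independent of the base station density λ.) -/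

import Mathlib

open MeasureTheory Real Set Filter Topology

lemma rint1 {p : ℝ} (hp : p < -1) : ∫ x in Ioi (1:ℝ), x ^ p = (-(p+1))⁻¹ := by
  rw [integral_Ioi_rpow_of_lt hp one_pos, one_rpow, neg_div, ← div_neg, one_div]

lemma series_int (α c : ℝ) (hα : 2 < α) (hc0 : 0 < c) (hc1 : c < 1) :
    ∫ x in Ioi (1:ℝ), c * x ^ (1 - α) / (1 + c * x ^ (-α))
      = c * ∑' n : ℕ, (-c) ^ n / (α * ((n:ℝ) + 1) - 2) := by
  set F : ℕ → ℝ → ℝ := fun n x => (-c) ^ n * c * x ^ (1 - α * ((n:ℝ) + 1)) with hF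
  have hplt : ∀ n : ℕ, 1 - α * ((n:ℝ) + 1) < -1 := by
    intro n
    have h0 : (0:ℝ) ≤ (n:ℝ) := Nat.cast_nonneg n
    nlinarith
  have hden : ∀ n : ℕ, (0:ℝ) < α * ((n:ℝ)+1) - 2 := fun n => by linarith [hplt n]
  have hexp : ∀ n : ℕ, -(1 - α * ((n:ℝ)+1) + 1) = α * ((n:ℝ)+1) - 2 := fun n => by ring
  have hpt : ∀ x ∈ Ioi (1:ℝ), c * x ^ (1 - α) / (1 + c * x ^ (-α)) = ∑' n : ℕ, F n x := by
    intro x hx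
    have hx1 : (1:ℝ) < x := hx
    have hx0 : (0:ℝ) < x := by linarith
    have hxa : 0 < x ^ (-α) := rpow_pos_of_pos hx0 _
    have hxle : x ^ (-α) ≤ 1 := rpow_le_one_of_one_le_of_nonpos hx1.le (by linarith)
    have habs : |(-(c * x ^ (-α)))| < 1 := by
      rw [abs_neg, abs_of_pos (by positivity)]
      nlinarith
    have hgeo : ∑' n : ℕ, (-(c * x ^ (-α))) ^ n = (1 + c * x ^ (-α))⁻¹ := by
      rw [tsum_geometric_of_abs_lt_one habs]; ring_nf
    have hterm : ∀ n : ℕ, F n x = (c * x ^ (1 - α)) * (-(c * x ^ (-α))) ^ n := by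
      intro n
      have h1 : (x ^ (-α)) ^ n = x ^ (-α * (n:ℝ)) := by
        rw [← rpow_natCast (x ^ (-α)) n, ← rpow_mul hx0.le]
      simp only [hF]
      rw [show (1 - α * ((n:ℝ)+1)) = (1-α) + (-α * (n:ℝ)) by ring, rpow_add hx0,
        show (-(c * x ^ (-α))) = (-1) * (c * x ^ (-α)) by ring, mul_pow, mul_pow, h1,
        show (-c) = (-1) * c by ring, mul_pow]
      ring
    rw [tsum_congr hterm, tsum_mul_left, hgeo]
    field_simp
  rw [setIntegral_congr_fun measurableSet_Ioi hpt]
  have hInt : ∀ n : ℕ, Integrable (fun x => F n x) (volume.restrict (Ioi (1:ℝ))) := by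
    intro n
    exact ((integrableOn_Ioi_rpow_of_lt (hplt n) one_pos).const_mul _)
  have hnorm : ∀ n : ℕ, (∫ x in Ioi (1:ℝ), ‖F n x‖) = c ^ (n+1) * (α * ((n:ℝ)+1) - 2)⁻¹ := by
    intro n
    have heq : ∀ x ∈ Ioi (1:ℝ), ‖F n x‖ = c ^ (n+1) * x ^ (1 - α * ((n:ℝ) + 1)) := by
      intro x hx
      have hx0 : (0:ℝ) < x := lt_trans one_pos hx
      simp only [hF]
      rw [norm_mul, norm_mul, norm_pow, norm_neg, Real.norm_of_nonneg hc0.le,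
        Real.norm_of_nonneg (rpow_nonneg hx0.le _)]
      ring
    rw [setIntegral_congr_fun measurableSet_Ioi heq, integral_const_mul, rint1 (hplt n), hexp n]
  have hsum : Summable fun n : ℕ => ∫ x in Ioi (1:ℝ), ‖F n x‖ := by
    simp_rw [hnorm]
    have hg : Summable (fun n : ℕ => (α - 2)⁻¹ * c ^ (n+1)) := by
      apply Summable.mul_left
      exact ((summable_geometric_of_lt_one hc0.le hc1).mul_right c).congr
        (fun n => by rw [pow_succ])
    refine Summable.of_nonneg_of_le (fun n => by have := hden n; positivity) (fun n => ?_) hg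
    rw [mul_comm ((α:ℝ) - 2)⁻¹]
    have h0 : (0:ℝ) ≤ (n:ℝ) := Nat.cast_nonneg n
    have h1 : α - 2 ≤ α * ((n:ℝ)+1) - 2 := by nlinarith
    exact mul_le_mul_of_nonneg_left (inv_anti₀ (by linarith) h1) (by positivity)
  rw [← integral_tsum_of_summable_integral_norm hInt hsum]
  have hval : ∀ n : ℕ, (∫ x in Ioi (1:ℝ), F n x) = c * ((-c) ^ n / (α * ((n:ℝ)+1) - 2)) := by
    intro n
    simp only [hF]
    rw [integral_const_mul, rint1 (hplt n), hexp n, div_eq_mul_inv]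
    ring
  rw [tsum_congr hval, tsum_mul_left]


lemma inner_cov (α c : ℝ) (hc0 : 0 < c) {u : ℝ} (hu : 0 < u) :
    ∫ ρ in Ioi u, (c * u ^ α * ρ ^ (1 - α)) / (1 + c * u ^ α * ρ ^ (-α))
      = u ^ 2 * ∫ x in Ioi (1:ℝ), c * x ^ (1 - α) / (1 + c * x ^ (-α)) := by
  set f : ℝ → ℝ := fun ρ => (c * u ^ α * ρ ^ (1 - α)) / (1 + c * u ^ α * ρ ^ (-α)) with hf
  have h := integral_comp_mul_left_Ioi f 1 hu
  rw [mul_one, smul_eq_mul] at h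
  have key : ∀ x ∈ Ioi (1:ℝ), f (u * x) = u * (c * x ^ (1 - α) / (1 + c * x ^ (-α))) := by
    intro x hx
    have hx0 : (0:ℝ) < x := lt_trans one_pos hx
    have e1 : (u * x) ^ (1 - α) = u ^ (1 - α) * x ^ (1 - α) := mul_rpow hu.le hx0.le
    have e2 : (u * x) ^ (-α) = u ^ (-α) * x ^ (-α) := mul_rpow hu.le hx0.le
    have e3 : u ^ α * u ^ (1 - α) = u := by
      rw [← rpow_add hu]; norm_num
    have e4 : u ^ α * u ^ (-α) = 1 := by
      rw [← rpow_add hu]; norm_num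
    simp only [hf]
    rw [e1, e2, show c * u ^ α * (u ^ (1-α) * x ^ (1-α)) = (u ^ α * u ^ (1-α)) * (c * x ^ (1-α)) by ring,
      show c * u ^ α * (u ^ (-α) * x ^ (-α)) = (u ^ α * u ^ (-α)) * (c * x ^ (-α)) by ring, e3, e4,
      one_mul, mul_div_assoc]
  have : ∫ ρ in Ioi u, f ρ = u * ∫ x in Ioi (1:ℝ), f (u * x) := by
    rw [h, ← mul_assoc, mul_inv_cancel₀ hu.ne', one_mul]
  rw [this, setIntegral_congr_fun measurableSet_Ioi key, integral_const_mul]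
  ring

lemma tendsto_aux (a b d : ℝ) (ha : 0 < a) (hb : b ≠ 0) :
    Tendsto (fun u : ℝ => -(Real.exp (-(a * u ^ 2)) * (u ^ 2 / b + d))) atTop (𝓝 0) := by
  have hcomp : Tendsto (fun u : ℝ => a * u ^ 2) atTop atTop :=
    (tendsto_pow_atTop (two_ne_zero)).const_mul_atTop ha
  have h1 : Tendsto (fun u : ℝ => (a * u ^ 2) * Real.exp (-(a * u ^ 2))) atTop (𝓝 0) := by
    have := (tendsto_pow_mul_exp_neg_atTop_nhds_zero 1).comp hcomp
    simpa [Function.comp_def] using this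
  have h2 : Tendsto (fun u : ℝ => Real.exp (-(a * u ^ 2))) atTop (𝓝 0) := by
    have := (tendsto_exp_neg_atTop_nhds_zero).comp hcomp
    simpa [Function.comp_def] using this
  have key : Tendsto (fun u : ℝ =>
      -((1/(a*b)) * ((a * u ^ 2) * Real.exp (-(a * u ^ 2))) + d * Real.exp (-(a * u ^ 2))))
      atTop (𝓝 0) := by
    have := ((h1.const_mul (1/(a*b))).add (h2.const_mul d)).neg
    simpa using this
  refine key.congr (fun u => ?_)
  field_simp

lemma gauss_u (a : ℝ) (ha : 0 < a) {r : ℝ} (hr : 0 ≤ r) :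
    ∫ u in Ioi r, u ^ 3 * Real.exp (-(a * u ^ 2))
      = Real.exp (-(a * r ^ 2)) * (r ^ 2 / (2*a) + 1 / (2*a^2)) := by
  set g : ℝ → ℝ := fun u => -(Real.exp (-(a * u ^ 2)) * (u ^ 2 / (2*a) + 1 / (2*a^2))) with hg
  have hderiv : ∀ x ∈ Ioi r, HasDerivAt g (x ^ 3 * Real.exp (-(a * x ^ 2))) x := by
    intro x _
    have h1 : HasDerivAt (fun u : ℝ => -(a * u ^ 2)) (-(a * (2 * x))) x := by
      exact (((hasDerivAt_pow 2 x).const_mul a).neg).congr_deriv (by norm_num)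
    have h2 := h1.exp
    have h3 : HasDerivAt (fun u : ℝ => u ^ 2 / (2*a) + 1 / (2*a^2)) (2 * x / (2*a)) x := by
      have h := ((hasDerivAt_pow 2 x).div_const (2*a)).add_const (1 / (2*a^2))
      exact h.congr_deriv (by norm_num)
    have := (h2.mul h3).neg
    have ha' := ha.ne'
    exact this.congr_deriv (by field_simp; ring)
  have hpos : ∀ x ∈ Ioi r, 0 ≤ x ^ 3 * Real.exp (-(a * x ^ 2)) := by
    intro x hx
    have : (0:ℝ) < x := lt_of_le_of_lt hr hx
    positivity
  have hcont : ContinuousWithinAt g (Ici r) r := by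
    apply Continuous.continuousWithinAt
    fun_prop
  have htend : Tendsto g atTop (𝓝 0) := tendsto_aux a (2*a) (1/(2*a^2)) ha (by positivity)
  rw [integral_Ioi_of_hasDerivAt_of_nonneg hcont hderiv hpos htend]
  simp only [hg]
  ring

lemma gauss_r (a : ℝ) (ha : 0 < a) :
    ∫ r in Ioi (0:ℝ), r * Real.exp (-(a * r ^ 2)) * (r ^ 2 / (2*a) + 1 / (2*a^2)) = 1/(2*a^3) := by
  set g : ℝ → ℝ := fun u => -(Real.exp (-(a * u ^ 2)) * (u ^ 2 / (4*a^2) + 1 / (2*a^3))) with hg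
  have hderiv : ∀ x ∈ Ioi (0:ℝ), HasDerivAt g (x * Real.exp (-(a * x ^ 2)) * (x ^ 2 / (2*a) + 1 / (2*a^2))) x := by
    intro x _
    have h1 : HasDerivAt (fun u : ℝ => -(a * u ^ 2)) (-(a * (2 * x))) x := by
      exact (((hasDerivAt_pow 2 x).const_mul a).neg).congr_deriv (by norm_num)
    have h2 := h1.exp
    have h3 : HasDerivAt (fun u : ℝ => u ^ 2 / (4*a^2) + 1 / (2*a^3)) (2 * x / (4*a^2)) x := by
      have h := ((hasDerivAt_pow 2 x).div_const (4*a^2)).add_const (1 / (2*a^3))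
      exact h.congr_deriv (by norm_num)
    have := (h2.mul h3).neg
    have ha' := ha.ne'
    exact this.congr_deriv (by field_simp; ring)
  have hpos : ∀ x ∈ Ioi (0:ℝ), 0 ≤ x * Real.exp (-(a * x ^ 2)) * (x ^ 2 / (2*a) + 1 / (2*a^2)) := by
    intro x hx
    have : (0:ℝ) < x := hx
    positivity
  have hcont : ContinuousWithinAt g (Ici 0) 0 := by
    apply Continuous.continuousWithinAt
    fun_prop
  have htend : Tendsto g atTop (𝓝 0) := tendsto_aux a (4*a^2) (1/(2*a^3)) ha (by positivity)
  rw [integral_Ioi_of_hasDerivAt_of_nonneg hcont hderiv hpos htend]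
  simp only [hg]
  norm_num


/-- Closed-form exponent of the Laplace transform of the interference in the
low-i₀ regime under minimum path loss association: the triple integral equals
4·s·i₀ Σ_{n≥0} (−s i₀)ⁿ/(α(n+1) − 2) (the series form of
(4 s i₀/(α−2)) ₂F₁(1,(α−2)/α;2−2/α;−s i₀)), and in particular is
independent of the base station density λ. -/
theorem stmt_8 (α lam i0 s : ℝ) (hα : 2 < α) (hlam : 0 < lam)
    (hi0 : 0 < i0) (hs : 0 < s) (hsi : s * i0 < 1) :
    2 * π * lam *
      (∫ r in Ioi (0:ℝ), ∫ u in Ioi r,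
        4 * (π * lam) ^ 2 * r * u * Real.exp (-(π * lam * u ^ 2)) *
          (∫ ρ in Ioi u,
            (s * i0 * u ^ α * ρ ^ (1 - α)) / (1 + s * i0 * u ^ α * ρ ^ (-α))))
    = 4 * (s * i0) * ∑' n : ℕ, (-(s * i0)) ^ n / (α * ((n : ℝ) + 1) - 2) := by
  have hπ := Real.pi_pos
  set a := π * lam with hadef
  have ha : 0 < a := by positivity
  set c := s * i0 with hcdef
  have hc0 : 0 < c := by positivity
  set J : ℝ := ∫ x in Ioi (1:ℝ), c * x ^ (1 - α) / (1 + c * x ^ (-α)) with hJ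
  have hJval : J = c * ∑' n : ℕ, (-c) ^ n / (α * ((n:ℝ) + 1) - 2) := by
    rw [hJ]; exact series_int α c hα hc0 hsi
  have houter : ∀ r ∈ Ioi (0:ℝ),
      (∫ u in Ioi r, 4 * a ^ 2 * r * u * Real.exp (-(a * u ^ 2)) *
        (∫ ρ in Ioi u, (c * u ^ α * ρ ^ (1 - α)) / (1 + c * u ^ α * ρ ^ (-α))))
      = (4 * a ^ 2 * J) * (r * Real.exp (-(a * r ^ 2)) * (r ^ 2 / (2*a) + 1 / (2*a^2))) := by
    intro r hr
    have hr0 : (0:ℝ) < r := hr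
    have hinner : ∀ u ∈ Ioi r,
        4 * a ^ 2 * r * u * Real.exp (-(a * u ^ 2)) *
          (∫ ρ in Ioi u, (c * u ^ α * ρ ^ (1 - α)) / (1 + c * u ^ α * ρ ^ (-α)))
        = (4 * a ^ 2 * r * J) * (u ^ 3 * Real.exp (-(a * u ^ 2))) := by
      intro u hu
      have hu0 : (0:ℝ) < u := lt_trans hr0 hu
      rw [inner_cov α c hc0 hu0, ← hJ]
      ring
    rw [setIntegral_congr_fun measurableSet_Ioi hinner, integral_const_mul,
      gauss_u a ha hr0.le]
    ring
  rw [setIntegral_congr_fun measurableSet_Ioi houter, integral_const_mul, gauss_r a ha,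
    hJval, show (2:ℝ) * π * lam = 2 * a by rw [hadef]; ring]
  have ha' : a ≠ 0 := ha.ne'
  field_simp
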